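/- Let ℓ ≥ 2 be an integer, let h be a real symmetric ℓ × ℓ matrix with trace(h) = 0, let α > 0 be a real number with ‖h‖ ≤ α (Frobenius norm), and let t be a real number with 0 ≤ t ≤ (1/α)·√(ℓ/(ℓ-1)). Then det(I - t·h) ≥ (1 - αt·√((ℓ-1)/ℓ))·(1 + αt/√(ℓ(ℓ-1)))^{ℓ-1}. -/

import Mathlib

open Matrix

open Real

/-- F(t) = log(1+t) - t + t²/2 is monotone on (-1, ∞). -/
private lemma F_mono : MonotoneOn (fun t : ℝ => Real.log (1+t) - t + t^2/2) (Set.Ioi (-1 : ℝ)) := by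
  apply monotoneOn_of_deriv_nonneg (convex_Ioi _)
  · apply ContinuousOn.add (ContinuousOn.sub ?_ (continuous_id.continuousOn))
      ((continuous_pow 2).continuousOn.div_const 2)
    apply (Real.continuousOn_log.comp (by fun_prop) ?_)
    intro x hx
    simp only [Set.mem_Ioi] at hx
    simp only [Set.mem_compl_iff, Set.mem_singleton_iff]
    intro hc; linarith
  · intro x hx
    rw [interior_Ioi, Set.mem_Ioi] at hx
    have h1 : HasDerivAt (fun t : ℝ => 1 + t) 1 x := by
      simpa using (hasDerivAt_id x).const_add (1:ℝ)
    have h2 : HasDerivAt (fun t : ℝ => Real.log (1+t)) (1/(1+x)) x :=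
      h1.log (by linarith)
    have h3 : HasDerivAt (fun t : ℝ => Real.log (1+t) - t + t^2/2) (1/(1+x) - 1 + x) x := by
      have := (h2.sub (hasDerivAt_id x)).add ((hasDerivAt_pow 2 x).div_const 2)
      exact this.congr_deriv (by norm_num)
    exact h3.differentiableAt.differentiableWithinAt
  · intro x hx
    rw [interior_Ioi, Set.mem_Ioi] at hx
    have h1 : HasDerivAt (fun t : ℝ => 1 + t) 1 x := by
      simpa using (hasDerivAt_id x).const_add (1:ℝ)
    have h2 : HasDerivAt (fun t : ℝ => Real.log (1+t)) (1/(1+x)) x :=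
      h1.log (by linarith)
    have h3 : HasDerivAt (fun t : ℝ => Real.log (1+t) - t + t^2/2) (1/(1+x) - 1 + x) x := by
      have := (h2.sub (hasDerivAt_id x)).add ((hasDerivAt_pow 2 x).div_const 2)
      exact this.congr_deriv (by norm_num)
    rw [h3.deriv]
    have hx1 : (0:ℝ) < 1 + x := by linarith
    have : 1/(1+x) - 1 + x = x^2/(1+x) := by field_simp; ring
    rw [this]; positivity

private lemma log_one_add_le {t : ℝ} (h1 : -1 < t) (h2 : t ≤ 0) :
    Real.log (1+t) ≤ t - t^2/2 := by
  have := F_mono (Set.mem_Ioi.2 h1) (Set.mem_Ioi.2 (show (-1:ℝ) < 0 by norm_num)) h2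
  simp at this; linarith

private lemma le_log_one_add {t : ℝ} (h : 0 ≤ t) :
    t - t^2/2 ≤ Real.log (1+t) := by
  have := F_mono (Set.mem_Ioi.2 (show (-1:ℝ) < 0 by norm_num)) (Set.mem_Ioi.2 (show (-1:ℝ) < t by linarith)) h
  simp at this; linarith


private lemma log_le_half_sub_inv {v : ℝ} (hv : 1 ≤ v) : Real.log v ≤ (v - 1/v)/2 := by
  have key : MonotoneOn (fun x : ℝ => (x - 1/x)/2 - Real.log x) (Set.Ici (1:ℝ)) := by
    apply monotoneOn_of_deriv_nonneg (convex_Ici _)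
    · apply ContinuousOn.sub
      · apply ContinuousOn.div_const
        apply ContinuousOn.sub continuous_id.continuousOn
        apply ContinuousOn.div continuousOn_const continuous_id.continuousOn
        intro x hx; simp only [Set.mem_Ici] at hx; intro hc; simp only [id] at hc; linarith
      · apply Real.continuousOn_log.mono
        intro x hx; simp only [Set.mem_Ici] at hx
        simp only [Set.mem_compl_iff, Set.mem_singleton_iff]; intro hc; linarith
    all_goals {
      intro x hx
      rw [interior_Ici, Set.mem_Ioi] at hx
      have hx0 : x ≠ 0 := by linarith
      have hd : HasDerivAt (fun x : ℝ => (x - 1/x)/2 - Real.log x)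
          ((1 - -(x^2)⁻¹)/2 - x⁻¹) x := by
        have h1 : HasDerivAt (fun x : ℝ => 1/x) (-(x^2)⁻¹) x := by
          simpa [one_div] using hasDerivAt_inv hx0
        exact (((hasDerivAt_id x).sub h1).div_const 2).sub (Real.hasDerivAt_log hx0)
      first
      | exact hd.differentiableAt.differentiableWithinAt
      | { rw [hd.deriv]
          have hx1 : (0:ℝ) < x := by linarith
          have : (1 - -(x^2)⁻¹)/2 - x⁻¹ = (x-1)^2/(2*x^2) := by field_simp; ring
          rw [this]; positivity } }
  have h0 := key (Set.mem_Ici.2 le_rfl) (Set.mem_Ici.2 hv) hv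
  norm_num at h0
  rw [← one_div] at h0; linarith


private lemma G_mono {y u : ℝ} (h0 : 0 < y) (hyu : y ≤ u) (hu : u < 1) :
    u^2 * (-Real.log (1-y) - y) ≤ y^2 * (-Real.log (1-u) - u) := by
  have key : MonotoneOn (fun x : ℝ => (-Real.log (1-x) - x)/x^2) (Set.Icc y u) := by
    apply monotoneOn_of_deriv_nonneg (convex_Icc _ _)
    · apply ContinuousOn.div
      · apply ContinuousOn.sub _ continuous_id.continuousOn
        apply ContinuousOn.neg
        apply Real.continuousOn_log.comp (by fun_prop)
        intro x hx
        simp only [Set.mem_Icc] at hx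
        simp only [Set.mem_compl_iff, Set.mem_singleton_iff]; intro hc; linarith [hx.2]
      · exact (continuous_pow 2).continuousOn
      · intro x hx; simp only [Set.mem_Icc] at hx
        exact pow_ne_zero 2 (by intro hc; rw [hc] at hx; linarith [hx.1])
    all_goals {
      intro x hx
      rw [interior_Icc, Set.mem_Ioo] at hx
      have hx0 : 0 < x := lt_trans h0 hx.1
      have hx1 : x < 1 := lt_trans hx.2 hu
      have h1x : (0:ℝ) < 1 - x := by linarith
      have hN : HasDerivAt (fun x : ℝ => -Real.log (1-x) - x) (-(-1/(1-x)) - 1) x := by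
        have hin : HasDerivAt (fun x : ℝ => 1 - x) (-1) x := by
          simpa using ((hasDerivAt_id x).const_sub (1:ℝ))
        exact ((hin.log (by linarith)).neg).sub (hasDerivAt_id x)
      have hd : HasDerivAt (fun x : ℝ => (-Real.log (1-x) - x)/x^2)
          (((-(-1/(1-x)) - 1) * x^2 - (-Real.log (1-x) - x) * ((2:ℕ)*x^(2-1)))/(x^2)^2) x :=
        hN.div (hasDerivAt_pow 2 x) (by positivity)
      first
      | exact hd.differentiableAt.differentiableWithinAt
      | { rw [hd.deriv]
          apply div_nonneg _ (by positivity)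
          have hL := log_le_half_sub_inv (v := 1/(1-x)) (by rw [le_div_iff₀ h1x]; linarith)
          rw [Real.log_div one_ne_zero (by linarith), Real.log_one] at hL
          have h2 : -Real.log (1-x) ≤ (2*x - x^2)/(2*(1-x)) := by
            have heq : (1/(1-x) - 1/(1/(1-x)))/2 = (2*x - x^2)/(2*(1-x)) := by
              rw [one_div_one_div]; field_simp; ring
            linarith [heq ▸ hL]
          have h6 : (-Real.log (1-x)) * (2*x*(1-x)) ≤ 2*x^2 - x^3 := by
            have hq := mul_le_mul_of_nonneg_right h2
              (show (0:ℝ) ≤ 2*x*(1-x) by positivity)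
            have heq2 : (2*x - x^2)/(2*(1-x)) * (2*x*(1-x)) = 2*x^2 - x^3 := by
              field_simp
            linarith [heq2 ▸ hq]
          norm_num
          have expand : (-(-1/(1-x)) - 1)*x^2 - (-Real.log (1-x) - x)*(2*x)
              = ((2*x^2 - x^3) - (-Real.log (1-x))*(2*x*(1-x)))/(1-x) := by
            field_simp; ring
          rw [← sub_nonneg, expand]
          apply div_nonneg _ (le_of_lt h1x)
          linarith [h6] } }
  rcases eq_or_lt_of_le hyu with rfl | hlt
  · exact le_rfl
  · have hk := key (Set.mem_Icc.2 ⟨le_rfl, hyu⟩) (Set.mem_Icc.2 ⟨hyu, le_rfl⟩) hyu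
    rw [div_le_div_iff₀ (pow_pos h0 2) (pow_pos (h0.trans hlt) 2)] at hk
    linarith


private lemma psi_nonneg {u y : ℝ} (hu0 : 0 < u) (hu1 : u < 1) (hy : y ≤ u) :
    0 ≤ Real.log (1-y) + y + ((-Real.log (1-u) - u)/u^2) * y^2 := by
  have hD : 1/2 ≤ (-Real.log (1-u) - u)/u^2 := by
    have := log_one_add_le (t := -u) (by linarith) (by linarith)
    rw [show (1:ℝ) + -u = 1 - u by ring] at this
    rw [le_div_iff₀ (by positivity)]
    nlinarith [this]
  rcases le_or_gt y 0 with hy0 | hy0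
  · have := le_log_one_add (t := -y) (by linarith)
    rw [show (1:ℝ) + -y = 1 - y by ring] at this
    nlinarith [sq_nonneg y, mul_le_mul_of_nonneg_right hD (sq_nonneg y)]
  · have hG := G_mono hy0 hy hu1
    have hu2 : (0:ℝ) < u^2 := by positivity
    have hkey : (-Real.log (1-y) - y) ≤ (-Real.log (1-u) - u) * y^2 / u^2 := by
      rw [le_div_iff₀ hu2]; nlinarith [hG]
    rw [div_mul_eq_mul_div]
    linarith [hkey]


open Finset in
private lemma core_prod (n : ℕ) (hn : 2 ≤ n) (μ : Fin n → ℝ) (hsum : ∑ i, μ i = 0)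
    (b : ℝ) (hb : 0 ≤ b) (hb1 : ((n:ℝ)-1)*b ≤ 1)
    (hsq : ∑ i, (μ i)^2 ≤ (n:ℝ)*((n:ℝ)-1)*b^2) :
    (1 - ((n:ℝ)-1)*b) * (1+b)^(n-1) ≤ ∏ i, (1 - μ i) := by
  have hn1 : (1:ℝ) ≤ (n:ℝ) - 1 := by
    have : (2:ℝ) ≤ n := by exact_mod_cast hn
    linarith
  have hnpos : (0:ℝ) < n := by linarith
  set a : ℝ := ((n:ℝ)-1)*b with ha_def
  have ha : 0 ≤ a := by positivity
  -- each |μ i| ≤ a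
  have key : ∀ i, |μ i| ≤ a := by
    intro i
    have hcs := sq_sum_le_card_mul_sum_sq (s := Finset.univ.erase i) (f := μ)
    rw [Finset.sum_erase_eq_sub (Finset.mem_univ i),
        Finset.sum_erase_eq_sub (Finset.mem_univ i), hsum,
        Finset.card_erase_of_mem (Finset.mem_univ i), Finset.card_univ,
        Fintype.card_fin] at hcs
    have hcast : ((n - 1 : ℕ) : ℝ) = (n:ℝ) - 1 := by
      rw [Nat.cast_sub (by omega)]; norm_num
    rw [hcast] at hcs
    have hsq_i : (μ i)^2 ≤ a^2 := by
      have hS : ∑ j, (μ j)^2 - (μ i)^2 ≤ (n:ℝ)*((n:ℝ)-1)*b^2 - (μ i)^2 := by linarith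
      have hS2 := mul_le_mul_of_nonneg_left hS (show (0:ℝ) ≤ (n:ℝ)-1 by linarith)
      rw [ha_def]
      nlinarith [hcs, hS2, hnpos, sq_nonneg (μ i)]
    calc |μ i| = Real.sqrt ((μ i)^2) := (Real.sqrt_sq_eq_abs _).symm
    _ ≤ Real.sqrt (a^2) := Real.sqrt_le_sqrt hsq_i
    _ = a := Real.sqrt_sq ha
  have hμle : ∀ i, μ i ≤ a := fun i => (abs_le.1 (key i)).2
  rcases eq_or_lt_of_le hb with hb0 | hb0
  · -- b = 0, all μ = 0
    have hμ0 : ∀ i, μ i = 0 := by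
      intro i
      have hk := key i
      rw [ha_def, ← hb0, mul_zero] at hk
      exact abs_nonpos_iff.mp hk
    rw [ha_def, ← hb0]
    simp [hμ0]
  rcases eq_or_lt_of_le hb1 with ha1 | ha1
  · -- a = 1 : RHS = 0
    rw [ha1]
    simp only [sub_self, zero_mul]
    apply Finset.prod_nonneg
    intro i _
    have := hμle i
    rw [ha1] at this
    linarith
  · -- main case a < 1
    have hpos : ∀ i, 0 < 1 - μ i := fun i => by have := hμle i; linarith
    set u : ℝ := (n:ℝ)*b/(1+b) with hu_def
    have h1b : (0:ℝ) < 1 + b := by linarith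
    have hu0 : 0 < u := by
      apply div_pos _ h1b; positivity
    have hu1 : u < 1 := by
      rw [hu_def, div_lt_one h1b]
      have : (n:ℝ)*b = a + b := by rw [ha_def]; ring
      linarith
    set D : ℝ := (-Real.log (1-u) - u)/u^2 with hD_def
    have hD0 : 0 ≤ D := by
      have hlog := Real.log_le_sub_one_of_pos (show (0:ℝ) < 1 - u by linarith)
      apply div_nonneg _ (by positivity)
      linarith
    have step1 : ∀ i, Real.log (1+b) - (μ i + b)/(1+b) - D * ((μ i + b)/(1+b))^2
        ≤ Real.log (1 - μ i) := by
      intro i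
      set y : ℝ := (μ i + b)/(1+b) with hy_def
      have hy : y ≤ u := by
        rw [hy_def, hu_def, div_le_div_iff_of_pos_right h1b]
        have hnb : (n:ℝ)*b = a + b := by rw [ha_def]; ring
        linarith [hμle i]
      have h1my : 1 - y = (1 - μ i)/(1+b) := by
        rw [hy_def]; field_simp; ring
      have hlogeq : Real.log (1 - μ i) = Real.log (1+b) + Real.log (1-y) := by
        rw [h1my, Real.log_div (hpos i).ne' h1b.ne']; ring
      have hψ := psi_nonneg hu0 hu1 hy
      rw [hlogeq]; rw [← hD_def] at hψ; linarith
    have hsumy : ∑ i, (μ i + b)/(1+b) = u := by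
      rw [← Finset.sum_div, Finset.sum_add_distrib, hsum, Finset.sum_const,
        Finset.card_univ, Fintype.card_fin, hu_def]
      simp [nsmul_eq_mul]
    have hsumy2 : ∑ i, ((μ i + b)/(1+b))^2 ≤ u^2 := by
      have hsum2 : ∑ i, (μ i + b)^2 = ∑ i, (μ i)^2 + 2*b*(∑ i, μ i) + (n:ℝ)*b^2 := by
        have hterm : ∀ i : Fin n, (μ i + b)^2 = (μ i)^2 + 2*b*(μ i) + b^2 :=
          fun i => by ring
        rw [Finset.sum_congr rfl (fun i _ => hterm i), Finset.sum_add_distrib,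
          Finset.sum_add_distrib, Finset.sum_const, Finset.card_univ, Fintype.card_fin,
          nsmul_eq_mul, ← Finset.mul_sum]
      have expand : ∑ i, ((μ i + b)/(1+b))^2 = (∑ i, (μ i + b)^2)/(1+b)^2 := by
        simp_rw [div_pow]
        rw [← Finset.sum_div]
      rw [expand, hsum2, hsum, hu_def, mul_div_assoc, mul_pow, div_pow,
        ← mul_div_assoc, div_le_div_iff_of_pos_right (by positivity)]
      nlinarith [hsq]
    have step2 : (n:ℝ)*Real.log (1+b) - u - D*u^2 ≤ ∑ i, Real.log (1 - μ i) := by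
      have h1 : ∑ i, (Real.log (1+b) - (μ i + b)/(1+b) - D * ((μ i + b)/(1+b))^2)
          ≤ ∑ i, Real.log (1 - μ i) := Finset.sum_le_sum (fun i _ => step1 i)
      rw [Finset.sum_sub_distrib, Finset.sum_sub_distrib, Finset.sum_const,
        Finset.card_univ, Fintype.card_fin, hsumy, ← Finset.mul_sum] at h1
      have h2 : D * ∑ i, ((μ i + b)/(1+b))^2 ≤ D * u^2 :=
        mul_le_mul_of_nonneg_left hsumy2 hD0
      calc (n:ℝ)*Real.log (1+b) - u - D*u^2
          ≤ (n:ℝ)*Real.log (1+b) - u - D * ∑ i, ((μ i + b)/(1+b))^2 := by linarith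
        _ ≤ ∑ i, Real.log (1 - μ i) := by
            convert h1 using 2
            simp [nsmul_eq_mul]
    have hDu : D * u^2 = -Real.log (1-u) - u := by
      rw [hD_def]; field_simp
    have h1a : 1 - a = (1+b)*(1-u) := by
      rw [ha_def, hu_def]; field_simp; ring
    have hprod_pos : 0 < ∏ i, (1 - μ i) := Finset.prod_pos (fun i _ => hpos i)
    have hRHS_pos : 0 < (1 - a)*(1+b)^(n-1) := by
      have : 0 < 1 - a := by linarith
      positivity
    rw [← Real.exp_log hRHS_pos, ← Real.exp_log hprod_pos]
    apply Real.exp_le_exp.2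
    rw [Real.log_prod (fun i _ => (hpos i).ne'),
      Real.log_mul (by linarith : (1:ℝ) - a ≠ 0) (by positivity), Real.log_pow, h1a,
      Real.log_mul h1b.ne' (by linarith : (1:ℝ) - u ≠ 0)]
    have hcast : ((n - 1 : ℕ) : ℝ) = (n:ℝ) - 1 := by
      rw [Nat.cast_sub (by omega)]; norm_num
    rw [hcast]
    linarith [step2, hDu]


open Matrix


theorem lawlor_determinant_lower_bound (ℓ : ℕ) (hℓ : 2 ≤ ℓ)
    (h : Matrix (Fin ℓ) (Fin ℓ) ℝ) (hsymm : h.IsSymm) (htr : Matrix.trace h = 0)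
    (α : ℝ) (hα : 0 < α) (hnorm : Real.sqrt (Matrix.trace (hᵀ * h)) ≤ α)
    (t : ℝ) (ht₀ : 0 ≤ t) (ht₁ : t ≤ (1 / α) * Real.sqrt ((ℓ : ℝ) / ((ℓ : ℝ) - 1))) :
    Matrix.det (1 - t • h) ≥
      (1 - α * t * Real.sqrt (((ℓ : ℝ) - 1) / ℓ)) *
        (1 + α * t / Real.sqrt ((ℓ : ℝ) * ((ℓ : ℝ) - 1))) ^ (ℓ - 1) := by
  have hℓR : (2:ℝ) ≤ (ℓ:ℝ) := by exact_mod_cast hℓ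
  have hℓ1 : (1:ℝ) ≤ (ℓ:ℝ) - 1 := by linarith
  have hH : h.IsHermitian := by
    show hᴴ = h
    rw [Matrix.conjTranspose_eq_transpose_of_trivial]
    exact hsymm
  set lam : Fin ℓ → ℝ := hH.eigenvalues with hlam
  set U : Matrix (Fin ℓ) (Fin ℓ) ℝ := (hH.eigenvectorUnitary : Matrix (Fin ℓ) (Fin ℓ) ℝ)
    with hUdef
  have hof : (RCLike.ofReal ∘ lam : Fin ℓ → ℝ) = lam := by
    funext i; simp
  have hspec : h = U * Matrix.diagonal lam * star U := by
    have := hH.spectral_theorem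
    rwa [hof] at this
  have hU1 : U * star U = 1 := (Matrix.mem_unitaryGroup_iff).mp hH.eigenvectorUnitary.2
  have hU2 : star U * U = 1 := (Matrix.mem_unitaryGroup_iff').mp hH.eigenvectorUnitary.2
  -- trace h = ∑ lam
  have htrace_lam : ∑ i, lam i = 0 := by
    have : Matrix.trace h = ∑ i, lam i := by
      rw [hspec, Matrix.trace_mul_comm, ← mul_assoc, hU2, one_mul, Matrix.trace_diagonal]
    rw [← this, htr]
  -- trace (hᵀ h) = ∑ lam²
  have htrsq : Matrix.trace (hᵀ * h) = ∑ i, (lam i)^2 := by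
    rw [hsymm]
    have hmul : h * h = U * (Matrix.diagonal lam * Matrix.diagonal lam) * star U := by
      conv_lhs => rw [hspec]
      rw [show U * Matrix.diagonal lam * star U * (U * Matrix.diagonal lam * star U)
          = U * Matrix.diagonal lam * (star U * U) * (Matrix.diagonal lam * star U) by
        simp only [mul_assoc], hU2, mul_one]
      simp only [mul_assoc]
    rw [hmul, Matrix.trace_mul_comm, ← mul_assoc, hU2, one_mul,
      Matrix.diagonal_mul_diagonal, Matrix.trace_diagonal]
    exact Finset.sum_congr rfl (fun i _ => (sq (lam i)).symm)
  -- determinant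
  have hdet : Matrix.det (1 - t • h) = ∏ i, (1 - t * lam i) := by
    have hfact : (1 : Matrix (Fin ℓ) (Fin ℓ) ℝ) - t • h
        = U * (1 - t • Matrix.diagonal lam) * star U := by
      rw [Matrix.mul_sub, Matrix.sub_mul, Matrix.mul_one, hU1, Matrix.mul_smul,
        Matrix.smul_mul, ← hspec]
    rw [hfact, Matrix.det_mul, Matrix.det_mul]
    have hdU : Matrix.det (star U) * Matrix.det U = 1 := by
      rw [← Matrix.det_mul, hU2, Matrix.det_one]
    have hdiag : (1 : Matrix (Fin ℓ) (Fin ℓ) ℝ) - t • Matrix.diagonal lam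
        = Matrix.diagonal (fun i => 1 - t * lam i) := by
      rw [← Matrix.diagonal_one, ← Matrix.diagonal_smul, ← Matrix.diagonal_sub]
      congr 1
    rw [hdiag, Matrix.det_diagonal]
    linear_combination (∏ i, (1 - t * lam i)) * hdU
  -- numeric setup
  have hsqrtpos : 0 < Real.sqrt ((ℓ:ℝ)*((ℓ:ℝ)-1)) := Real.sqrt_pos.2 (by nlinarith)
  set b : ℝ := α*t/Real.sqrt ((ℓ:ℝ)*((ℓ:ℝ)-1)) with hbdef
  have hb : 0 ≤ b := by positivity
  have hs : α * t ≤ Real.sqrt ((ℓ:ℝ)/((ℓ:ℝ)-1)) := by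
    have h' := mul_le_mul_of_nonneg_left ht₁ (le_of_lt hα)
    have heq : α * (1 / α * Real.sqrt ((ℓ:ℝ)/((ℓ:ℝ)-1))) = Real.sqrt ((ℓ:ℝ)/((ℓ:ℝ)-1)) := by
      field_simp
    rw [heq] at h'
    exact h'
  have hkey : Real.sqrt ((ℓ:ℝ)/((ℓ:ℝ)-1)) * ((ℓ:ℝ)-1) = Real.sqrt ((ℓ:ℝ)*((ℓ:ℝ)-1)) := by
    rw [show (ℓ:ℝ)*((ℓ:ℝ)-1) = ((ℓ:ℝ)/((ℓ:ℝ)-1)) * ((ℓ:ℝ)-1)^2 by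
        rw [div_mul_eq_mul_div, eq_div_iff (by linarith : (ℓ:ℝ)-1 ≠ 0)]; ring,
      Real.sqrt_mul (by positivity), Real.sqrt_sq (by linarith)]
  have hb1 : ((ℓ:ℝ)-1)*b ≤ 1 := by
    rw [hbdef, mul_div_assoc', div_le_one hsqrtpos]
    calc ((ℓ:ℝ)-1)*(α*t) ≤ ((ℓ:ℝ)-1) * Real.sqrt ((ℓ:ℝ)/((ℓ:ℝ)-1)) := by
          apply mul_le_mul_of_nonneg_left hs (by linarith)
      _ = Real.sqrt ((ℓ:ℝ)*((ℓ:ℝ)-1)) := by rw [mul_comm]; exact hkey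
  have hkey2 : α * t * Real.sqrt (((ℓ:ℝ)-1)/(ℓ:ℝ)) = ((ℓ:ℝ)-1)*b := by
    have h2 : Real.sqrt (((ℓ:ℝ)-1)/(ℓ:ℝ)) * Real.sqrt ((ℓ:ℝ)*((ℓ:ℝ)-1)) = (ℓ:ℝ)-1 := by
      rw [← Real.sqrt_mul (by positivity),
        show (((ℓ:ℝ)-1)/(ℓ:ℝ))*((ℓ:ℝ)*((ℓ:ℝ)-1)) = ((ℓ:ℝ)-1)^2 by
          rw [div_mul_eq_mul_div, div_eq_iff (by linarith : (ℓ:ℝ) ≠ 0)]; ring,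
        Real.sqrt_sq (by linarith)]
    have h3 : Real.sqrt (((ℓ:ℝ)-1)/(ℓ:ℝ)) = ((ℓ:ℝ)-1)/Real.sqrt ((ℓ:ℝ)*((ℓ:ℝ)-1)) := by
      rw [eq_div_iff hsqrtpos.ne']; exact h2
    rw [hbdef, h3]
    ring
  -- sum of squares bound
  have htr_nonneg : 0 ≤ Matrix.trace (hᵀ * h) := by
    rw [htrsq]; positivity
  have htrle : Matrix.trace (hᵀ * h) ≤ α^2 := by
    nlinarith [Real.sq_sqrt htr_nonneg, hnorm, Real.sqrt_nonneg (Matrix.trace (hᵀ * h))]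
  have hsqb : (ℓ:ℝ)*((ℓ:ℝ)-1)*b^2 = (α*t)^2 := by
    rw [hbdef, div_pow, Real.sq_sqrt (by positivity)]
    field_simp
  have hsq : ∑ i, (t * lam i)^2 ≤ (ℓ:ℝ)*((ℓ:ℝ)-1)*b^2 := by
    rw [hsqb]
    have : ∑ i, (t * lam i)^2 = t^2 * ∑ i, (lam i)^2 := by
      rw [Finset.mul_sum]; exact Finset.sum_congr rfl (fun i _ => by ring)
    rw [this, ← htrsq]
    nlinarith [htrle, sq_nonneg t]
  have hsum : ∑ i, t * lam i = 0 := by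
    rw [← Finset.mul_sum, htrace_lam, mul_zero]
  have := core_prod ℓ hℓ (fun i => t * lam i) hsum b hb hb1 hsq
  rw [ge_iff_le, hdet, hkey2]
  exact this
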